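/- arXiv:1802.08210 — 3 statements merged into one kernel-verified Lean document; each statement's English description precedes it below -/
import Mathlib

section
/- Symmetrization identity over the symmetric group: for pairwise distinct elements u_1, ..., u_k of a field and a parameter q with all denominators nonzero, Σ_{σ ∈ S_k} ∏_{1 ≤ i < j ≤ k} (u_{σ(i)} − q u_{σ(j)})/(u_{σ(i)} − u_{σ(j)}) = ∏_{i=1}^k (1 + q + q^2 + ⋯ + q^{i−1}), i.e. the q-factorial [k]_q! = ∏_{i=1}^k (1−q^i)/(1−q). -/
open Finset Polynomial

/-- Splitting the ordered-pairs product over `Fin (k+1)`. -/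
lemma double_prod_succ {M : Type*} [CommMonoid M] {k : ℕ} (g : Fin (k+1) → Fin (k+1) → M) :
    ∏ i : Fin (k+1), ∏ j ∈ Finset.Ioi i, g i j
      = (∏ j : Fin k, g 0 j.succ) * ∏ i : Fin k, ∏ j ∈ Finset.Ioi i, g i.succ j.succ := by
  rw [Fin.prod_univ_succ, Fin.prod_Ioi_zero]
  congr 1
  exact Finset.prod_congr rfl fun i _ => Fin.prod_Ioi_succ _ i

lemma prod_swap_succ {M : Type*} [CommMonoid M] {k : ℕ} (p : Fin (k+1)) (h : Fin (k+1) → M) :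
    ∏ l : Fin k, h (Equiv.swap 0 p l.succ) = ∏ l ∈ Finset.univ.erase p, h l := by
  refine Finset.prod_bij' (fun a _ => Equiv.swap 0 p a.succ)
    (fun b hb => (Equiv.swap 0 p b).pred ?_) ?_ ?_ ?_ ?_ ?_
  · intro hb0
    exact (Finset.mem_erase.mp hb).1 ((Equiv.swap 0 p).injective
      (hb0.trans (Equiv.swap_apply_right 0 p).symm))
  · intro a _
    simp only [Finset.mem_erase, Finset.mem_univ, and_true]
    intro hap
    exact Fin.succ_ne_zero a ((Equiv.swap 0 p).injective
      (hap.trans (Equiv.swap_apply_left 0 p).symm))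
  · intro b hb; exact Finset.mem_univ _
  · intro a _
    simp
  · intro b hb
    simp
  · intro a _; rfl

lemma prod_erase_last {M : Type*} [CommMonoid M] {k : ℕ} (h : Fin (k+2) → M) :
    ∏ l ∈ Finset.univ.erase (Fin.last (k+1)), h l = ∏ l : Fin (k+1), h l.castSucc := by
  rw [Fin.univ_castSuccEmb, Finset.erase_cons, Finset.prod_map]
  rfl

lemma prod_erase_castSucc {M : Type*} [CommMonoid M] {k : ℕ} (m : Fin (k+1))
    (h : Fin (k+2) → M) :
    ∏ l ∈ Finset.univ.erase m.castSucc, h l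
      = h (Fin.last (k+1)) * ∏ l ∈ Finset.univ.erase m, h l.castSucc := by
  have hset : Finset.univ.erase m.castSucc
      = insert (Fin.last (k+1)) ((Finset.univ.erase m).map Fin.castSuccEmb) := by
    ext a
    simp only [Finset.mem_erase, Finset.mem_univ, and_true, Finset.mem_insert, Finset.mem_map,
      Fin.coe_castSuccEmb]
    constructor
    · intro ha
      rcases Fin.eq_castSucc_or_eq_last a with ⟨b, rfl⟩ | rfl
      · refine Or.inr ⟨b, fun hb => ha (by rw [hb]), rfl⟩
      · exact Or.inl rfl
    · rintro (rfl | ⟨b, hb, rfl⟩)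
      · exact (Fin.castSucc_lt_last m).ne'
      · exact fun hc => hb (Fin.castSucc_injective _ hc)
  rw [hset, Finset.prod_insert (by simp [Fin.ext_iff]; omega), Finset.prod_map]
  rfl

lemma key_lemma : ∀ (k : ℕ) (u : Fin k → ℂ) (q : ℂ), Function.Injective u →
    ∑ p : Fin k, ∏ l ∈ Finset.univ.erase p, (u p - q * u l) / (u p - u l)
      = ∑ j ∈ Finset.range k, q ^ j := by
  intro k
  induction k with
  | zero => intro u q _; simp
  | succ k ih =>
    rcases k with _ | k
    · intro u q _
      have h0 : (Finset.univ : Finset (Fin 1)).erase 0 = ∅ := by decide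
      simp [Fin.sum_univ_one, h0]
    · intro u q hu
      set w : Fin (k+1) → ℂ := fun i => u i.castSucc with hw
      set x : ℂ := u (Fin.last (k+1)) with hx
      have hwinj : Function.Injective w := fun a b hab =>
        Fin.castSucc_injective _ (hu hab)
      have hxw : ∀ l, x - w l ≠ 0 := fun l =>
        sub_ne_zero.mpr fun hc => (Fin.castSucc_lt_last l).ne' (hu hc)
      have hww : ∀ {i l : Fin (k+1)}, l ≠ i → w i - w l ≠ 0 := fun h =>
        sub_ne_zero.mpr fun hc => h (hwinj hc).symm
      set B : Fin (k+1) → ℂ :=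
        fun m => ∏ l ∈ Finset.univ.erase m, (w m - q * w l) / (w m - w l) with hB
      have hIH : ∑ m, B m = ∑ j ∈ Finset.range (k+1), q ^ j := ih w q hwinj
      have hBnum : ∀ m, B m * ∏ l ∈ Finset.univ.erase m, (w m - w l)
          = ∏ l ∈ Finset.univ.erase m, (w m - q * w l) := by
        intro m
        rw [hB, ← Finset.prod_mul_distrib]
        exact Finset.prod_congr rfl fun l hl =>
          div_mul_cancel₀ _ (hww (Finset.mem_erase.mp hl).1)
      set V : Polynomial ℂ := ∏ l : Fin (k+1), (X - C (w l)) with hV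
      set P : Polynomial ℂ := ∏ l : Fin (k+1), (X - C (q * w l)) with hP
      set W : Fin (k+1) → Polynomial ℂ :=
        fun m => ∏ l ∈ Finset.univ.erase m, (X - C (w l)) with hW
      set G : Polynomial ℂ :=
        P - ∑ m : Fin (k+1), C (B m) * ((C (w m) - C q * X) * W m) with hG
      set c : ℂ := 1 + q * ∑ m, B m with hc
      have hVmon : V.Monic := monic_prod_of_monic _ _ fun _ _ => monic_X_sub_C _
      have hVdeg : V.natDegree = k + 1 := by
        rw [hV, natDegree_prod_of_monic _ _ fun _ _ => monic_X_sub_C _]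
        simp [natDegree_X_sub_C]
      have hPmon : P.Monic := monic_prod_of_monic _ _ fun _ _ => monic_X_sub_C _
      have hPdeg : P.natDegree = k + 1 := by
        rw [hP, natDegree_prod_of_monic _ _ fun _ _ => monic_X_sub_C _]
        simp only [natDegree_X_sub_C, Finset.sum_const, Finset.card_univ, Fintype.card_fin,
          smul_eq_mul, mul_one]
      have hWmon : ∀ m, (W m).Monic := fun m =>
        monic_prod_of_monic _ _ fun _ _ => monic_X_sub_C _
      have hWdeg : ∀ m, (W m).natDegree = k := by
        intro m
        rw [hW]
        rw [natDegree_prod_of_monic _ _ fun _ _ => monic_X_sub_C _]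
        simp [natDegree_X_sub_C, Finset.card_erase_of_mem]
      have hGcoeff : G.coeff (k+1) = c := by
        have h1 : P.coeff (k+1) = 1 := by rw [← hPdeg]; exact hPmon.coeff_natDegree
        have h2 : ∀ m : Fin (k+1),
            (C (B m) * ((C (w m) - C q * X) * W m)).coeff (k+1) = -(q * B m) := by
          intro m
          have hrng : (C (w m) - C q * X) * W m = C (w m) * W m - C q * (X * W m) := by ring
          have hWk : (W m).coeff (k+1) = 0 :=
            coeff_eq_zero_of_natDegree_lt (by rw [hWdeg m]; omega)
          have hWk' : (W m).coeff k = 1 := by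
            rw [← hWdeg m]; exact (hWmon m).coeff_natDegree
          rw [coeff_C_mul, hrng, coeff_sub, coeff_C_mul, coeff_C_mul, coeff_X_mul, hWk, hWk']
          ring
        rw [hG, coeff_sub, finset_sum_coeff, h1]
        simp only [h2]
        rw [Finset.sum_neg_distrib, ← Finset.mul_sum, hc]
        ring
      have hGdeg : G.natDegree ≤ k + 1 := by
        rw [hG]
        refine (natDegree_sub_le _ _).trans (max_le (le_of_eq hPdeg) ?_)
        refine natDegree_sum_le_of_forall_le _ _ fun m _ => ?_
        refine natDegree_mul_le.trans ?_
        rw [natDegree_C, zero_add]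
        refine natDegree_mul_le.trans ?_
        have h1 : (C (w m) - C q * X).natDegree ≤ 1 :=
          (natDegree_sub_le _ _).trans
            (max_le (by simp) ((natDegree_C_mul_le _ _).trans (by simp)))
        have h2 : (W m).natDegree ≤ k := le_of_eq (hWdeg m)
        omega
      have hGev : ∀ i, G.eval (w i) = 0 := by
        intro i
        have hsum : ∑ m : Fin (k+1), (C (B m) * ((C (w m) - C q * X) * W m)).eval (w i)
            = B i * ((w i - q * w i) * ∏ l ∈ Finset.univ.erase i, (w i - w l)) := by
          rw [Finset.sum_eq_single i]
          · simp [hW, eval_prod]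
          · intro m _ hmi
            have hWz : (W m).eval (w i) = 0 := by
              rw [hW]
              simp only [eval_prod, eval_sub, eval_X, eval_C]
              exact Finset.prod_eq_zero
                (Finset.mem_erase.mpr ⟨hmi.symm, Finset.mem_univ i⟩) (by simp)
            simp [hWz]
          · simp
        rw [hG, eval_sub, eval_finset_sum]
        simp only [eval_mul, eval_sub, eval_C, eval_X] at hsum ⊢
        rw [hsum, hP, eval_prod]
        simp only [eval_sub, eval_X, eval_C]
        rw [← Finset.mul_prod_erase _ _ (Finset.mem_univ i), ← hBnum i]
        ring
      have hVev : ∀ i, V.eval (w i) = 0 := by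
        intro i
        rw [hV, eval_prod]
        exact Finset.prod_eq_zero (Finset.mem_univ i) (by simp)
      have hH : G - C c * V = 0 := by
        by_cases h0 : G - C c * V = 0
        · exact h0
        · have hdeg : (G - C c * V).natDegree ≤ k + 1 :=
            (natDegree_sub_le _ _).trans
              (max_le hGdeg ((natDegree_C_mul_le _ _).trans (le_of_eq hVdeg)))
          have hco : (G - C c * V).coeff (k+1) = 0 := by
            rw [coeff_sub, hGcoeff, coeff_C_mul, ← hVdeg, hVmon.coeff_natDegree, mul_one,
              sub_self]
          refine Polynomial.eq_zero_of_natDegree_lt_card_of_eval_eq_zero _ hwinj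
            (fun i => by rw [eval_sub, eval_mul, eval_C, hGev i, hVev i, mul_zero, sub_zero]) ?_
          rw [Fintype.card_fin]
          rcases lt_or_eq_of_le hdeg with h | h
          · exact h
          · exact absurd (leadingCoeff_eq_zero.mp (by rw [leadingCoeff, h]; exact hco)) h0
      have hGeq : G = C c * V := sub_eq_zero.mp hH
      have hGx : (∏ l : Fin (k+1), (x - q * w l))
          - (∑ m : Fin (k+1), B m * ((w m - q * x) * ∏ l ∈ Finset.univ.erase m, (x - w l)))
          = c * ∏ l : Fin (k+1), (x - w l) := by
        have := congrArg (Polynomial.eval x) hGeq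
        rw [hG] at this
        simp only [eval_sub, eval_mul, eval_C, eval_X, eval_finset_sum, eval_prod, hP, hV,
          hW] at this
        simpa using this
      -- now the target
      rw [Fin.sum_univ_castSucc, geom_sum_succ, ← hIH]
      have hlast : ∏ l ∈ Finset.univ.erase (Fin.last (k+1)),
          (u (Fin.last (k+1)) - q * u l) / (u (Fin.last (k+1)) - u l)
          = ∏ l : Fin (k+1), (x - q * w l) / (x - w l) := by
        rw [prod_erase_last]
      have hcs : ∀ m : Fin (k+1), ∏ l ∈ Finset.univ.erase m.castSucc,
          (u m.castSucc - q * u l) / (u m.castSucc - u l)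
          = (w m - q * x) / (w m - x) * B m := by
        intro m
        rw [prod_erase_castSucc m (fun l => (u m.castSucc - q * u l) / (u m.castSucc - u l))]
      rw [hlast]
      rw [Finset.sum_congr rfl fun m _ => hcs m]
      have hVxne : (∏ l : Fin (k+1), (x - w l)) ≠ 0 :=
        Finset.prod_ne_zero_iff.mpr fun l _ => hxw l
      apply mul_right_cancel₀ hVxne
      rw [add_mul, Finset.sum_mul, Finset.prod_div_distrib, div_mul_cancel₀ _ hVxne]
      have hterm : ∀ m : Fin (k+1),
          (w m - q * x) / (w m - x) * B m * ∏ l : Fin (k+1), (x - w l)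
            = -(B m * ((w m - q * x) * ∏ l ∈ Finset.univ.erase m, (x - w l))) := by
        intro m
        rw [← Finset.mul_prod_erase _ _ (Finset.mem_univ m)]
        have hmx : w m - x ≠ 0 := sub_ne_zero.mpr fun h => sub_ne_zero.mp (hxw m) h.symm
        field_simp
        ring
      rw [Finset.sum_congr rfl fun m _ => hterm m, Finset.sum_neg_distrib]
      linear_combination hGx

lemma main_aux : ∀ (k : ℕ) (u : Fin k → ℂ) (q : ℂ), Function.Injective u →
    ∑ σ : Equiv.Perm (Fin k),
        ∏ i : Fin k, ∏ j ∈ Finset.Ioi i,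
          (u (σ i) - q * u (σ j)) / (u (σ i) - u (σ j)) =
      ∏ i ∈ Finset.range k, ∑ j ∈ Finset.range (i+1), q^j := by
  intro k
  induction k with
  | zero => intro u q _; simp
  | succ k ih =>
    intro u q hu
    rw [← Equiv.sum_comp (Equiv.Perm.decomposeFin.symm)
      (fun σ => ∏ i : Fin (k+1), ∏ j ∈ Finset.Ioi i,
        (u (σ i) - q * u (σ j)) / (u (σ i) - u (σ j)))]
    rw [Fintype.sum_prod_type]
    have hstep : ∀ (p : Fin (k+1)) (e : Equiv.Perm (Fin k)),
        (∏ i : Fin (k+1), ∏ j ∈ Finset.Ioi i,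
          (u (Equiv.Perm.decomposeFin.symm (p, e) i)
              - q * u (Equiv.Perm.decomposeFin.symm (p, e) j)) /
            (u (Equiv.Perm.decomposeFin.symm (p, e) i)
              - u (Equiv.Perm.decomposeFin.symm (p, e) j)))
        = (∏ l ∈ Finset.univ.erase p, (u p - q * u l) / (u p - u l)) *
          ∏ i : Fin k, ∏ j ∈ Finset.Ioi i,
            (u (Equiv.swap 0 p (e i).succ) - q * u (Equiv.swap 0 p (e j).succ)) /
              (u (Equiv.swap 0 p (e i).succ) - u (Equiv.swap 0 p (e j).succ)) := by
      intro p e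
      rw [double_prod_succ]
      congr 1
      · simp only [Equiv.Perm.decomposeFin_symm_apply_zero,
          Equiv.Perm.decomposeFin_symm_apply_succ]
        rw [Equiv.prod_comp e (fun l => (u p - q * u (Equiv.swap 0 p l.succ)) /
          (u p - u (Equiv.swap 0 p l.succ)))]
        exact prod_swap_succ p (fun l => (u p - q * u l) / (u p - u l))
      · simp only [Equiv.Perm.decomposeFin_symm_apply_succ]
    have hinner : ∀ p : Fin (k+1),
        ∑ e : Equiv.Perm (Fin k), ∏ i : Fin k, ∏ j ∈ Finset.Ioi i,
          (u (Equiv.swap 0 p (e i).succ) - q * u (Equiv.swap 0 p (e j).succ)) /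
            (u (Equiv.swap 0 p (e i).succ) - u (Equiv.swap 0 p (e j).succ))
        = ∏ i ∈ Finset.range k, ∑ j ∈ Finset.range (i+1), q^j := by
      intro p
      have hv : Function.Injective (fun i : Fin k => u (Equiv.swap 0 p i.succ)) := by
        intro a b hab
        exact Fin.succ_injective _ ((Equiv.swap 0 p).injective (hu hab))
      simpa using ih (fun i => u (Equiv.swap 0 p i.succ)) q hv
    simp only [hstep]
    have hcollapse : ∀ p : Fin (k+1),
        (∑ e : Equiv.Perm (Fin k),
          (∏ l ∈ Finset.univ.erase p, (u p - q * u l) / (u p - u l)) *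
          ∏ i : Fin k, ∏ j ∈ Finset.Ioi i,
            (u (Equiv.swap 0 p (e i).succ) - q * u (Equiv.swap 0 p (e j).succ)) /
              (u (Equiv.swap 0 p (e i).succ) - u (Equiv.swap 0 p (e j).succ)))
        = (∏ l ∈ Finset.univ.erase p, (u p - q * u l) / (u p - u l)) *
          ∏ i ∈ Finset.range k, ∑ j ∈ Finset.range (i+1), q^j := by
      intro p
      rw [← Finset.mul_sum, hinner p]
    rw [Finset.sum_congr rfl fun p _ => hcollapse p, ← Finset.sum_mul,
      key_lemma (k+1) u q hu, Finset.prod_range_succ]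
    ring

/-- Symmetrization identity over the symmetric group: for pairwise distinct `u_1, ..., u_k`
and a parameter `q`,
`Σ_{σ ∈ S_k} ∏_{i<j} (u_{σ(i)} − q u_{σ(j)})/(u_{σ(i)} − u_{σ(j)})
  = ∏_{i=1}^k (1 + q + ⋯ + q^{i−1})`, the `q`-factorial `[k]_q!`. -/
theorem symmetrization_identity {k : ℕ} (u : Fin k → ℂ) (q : ℂ)
    (hu : Function.Injective u) :
    ∑ σ : Equiv.Perm (Fin k),
        ∏ i : Fin k, ∏ j ∈ Finset.Ioi i,
          (u (σ i) - q * u (σ j)) / (u (σ i) - u (σ j)) =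
      ∏ i ∈ Finset.range k, ∑ j ∈ Finset.range (i+1), q^j := by
  exact main_aux k u q hu
end

section
/- String specialization identity (q-Whittaker case): let λ = (λ_1 ≥ ⋯ ≥ λ_m > 0) be a partition of k with m parts, let 0 < q < 1 and let w_1, ..., w_m be complex numbers such that all denominators below are nonzero. Define the k-vector (z_1,...,z_k) = (w_1, q w_1, ..., q^{λ_1−1} w_1, w_2, ..., q^{λ_2−1} w_2, ..., q^{λ_m−1} w_m). Then ∏_{1 ≤ a < b ≤ k} (1 − q z_a z_b)/(1 − z_a z_b) · ∏_{i=1}^k 1/(1 − z_i^2) = ∏_{1 ≤ a < b ≤ m} [(q^{λ_a} w_a w_b; q)_∞ (q^{λ_b} w_a w_b; q)_∞]/[(w_a w_b; q)_∞ (q^{λ_a+λ_b} w_a w_b; q)_∞] · ∏_{j=1}^m (q^{λ_j} w_j^2; q)_∞/(w_j^2; q)_∞. -/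
open Finset

noncomputable def qPochInf (a q : ℂ) : ℂ := ∏' i : ℕ, (1 - a * q^i)

open Finset in
lemma hasProd_zero_of_eq_zero {f : ℕ → ℂ} (i₀ : ℕ) (h : f i₀ = 0) : HasProd f 0 := by
  have : ∀ᶠ s : Finset ℕ in Filter.atTop, ∏ i ∈ s, f i = 0 := by
    filter_upwards [Filter.eventually_ge_atTop {i₀}] with s hs
    exact Finset.prod_eq_zero (by simpa using hs) h
  exact tendsto_const_nhds.congr' (by filter_upwards [this] with s hs; exact hs.symm)

lemma qPoch_factor_ne_zero {x q : ℂ} (h : qPochInf x q ≠ 0) (i : ℕ) : 1 - x * q^i ≠ 0 := by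
  intro h0
  exact h ((hasProd_zero_of_eq_zero i h0).tprod_eq)

lemma qPoch_multipliable (x : ℂ) {q : ℂ} (hq : ‖q‖ < 1) (hne : ∀ i, 1 - x * q^i ≠ 0) :
    Multipliable (fun i : ℕ => 1 - x * q^i) := by
  have hsum : Summable (fun n : ℕ => Complex.log (1 - x * q^n)) := by
    have hg : Summable (fun n : ℕ => (3/2 : ℝ) * (‖x‖ * ‖q‖^n)) :=
      ((summable_geometric_of_lt_one (norm_nonneg q) hq).mul_left ‖x‖).mul_left _
    apply Summable.of_norm_bounded_eventually_nat hg
    have h0 : Filter.Tendsto (fun n : ℕ => ‖x‖ * ‖q‖^n) Filter.atTop (nhds 0) := by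
      simpa using tendsto_const_nhds.mul (tendsto_pow_atTop_nhds_zero_of_lt_one (norm_nonneg q) hq)
    filter_upwards [h0.eventually_le_const (by norm_num : (0:ℝ) < 1/2)] with n hn
    have hxn : ‖-(x * q^n)‖ ≤ 1/2 := by
      rw [norm_neg, norm_mul, norm_pow]; exact hn
    calc ‖Complex.log (1 - x * q^n)‖ = ‖Complex.log (1 + -(x * q^n))‖ := by rw [sub_eq_add_neg]
      _ ≤ 3/2 * ‖-(x * q^n)‖ := Complex.norm_log_one_add_half_le_self hxn
      _ = 3/2 * (‖x‖ * ‖q‖^n) := by rw [norm_neg, norm_mul, norm_pow]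
  exact Complex.multipliable_of_summable_log hsum

open Finset in
lemma qPoch_split (x : ℂ) {q : ℂ} (hq : ‖q‖ < 1) (hne : ∀ i, 1 - x * q^i ≠ 0) (n : ℕ) :
    qPochInf x q = (∏ i ∈ range n, (1 - x * q^i)) * qPochInf (q^n * x) q := by
  have hne' : ∀ i, 1 - (q^n * x) * q^i ≠ 0 := by
    intro i
    have := hne (n + i)
    rw [pow_add] at this
    convert this using 2
    ring
  have hm : Multipliable (fun i : ℕ => (1 - x * q^(i + n))) := by
    apply (qPoch_multipliable (q^n * x) hq hne').congr
    intro i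
    rw [pow_add]
    ring
  have h := Multipliable.prod_mul_tprod_nat_mul' (f := fun i : ℕ => 1 - x * q^i) (k := n) hm
  rw [qPochInf, ← h, qPochInf]
  congr 1
  exact tprod_congr (fun i => by show 1 - x * q ^ (i + n) = _; rw [pow_add]; ring)

open Finset in
lemma qPoch_ratio_diag {y q : ℂ} (hq : ‖q‖ < 1) (hA : qPochInf y q ≠ 0) (n : ℕ) :
    qPochInf (q^n * y) q / qPochInf y q = (∏ i ∈ range n, (1 - y * q^i))⁻¹ := by
  have hne := qPoch_factor_ne_zero hA
  have hsplit := qPoch_split y hq hne n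
  have hP : (∏ i ∈ range n, (1 - y * q^i)) ≠ 0 := prod_ne_zero_iff.2 (fun i _ => hne i)
  have hT : qPochInf (q^n * y) q ≠ 0 := by
    intro h0; rw [hsplit, h0, mul_zero] at hA; exact hA rfl
  rw [hsplit]
  field_simp

open Finset in
lemma qPoch_ratio_pair {x q : ℂ} (hq : ‖q‖ < 1) (hA : qPochInf x q ≠ 0)
    (n1 n2 : ℕ) (hs : qPochInf (q^(n1+n2) * x) q ≠ 0) :
    (qPochInf (q^n1 * x) q * qPochInf (q^n2 * x) q) / (qPochInf x q * qPochInf (q^(n1+n2) * x) q)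
      = (∏ s ∈ range n1, (1 - x * q^(n2+s))) / (∏ s ∈ range n1, (1 - x * q^s)) := by
  have hne := qPoch_factor_ne_zero hA
  have hsplit1 := qPoch_split x hq hne n1
  have hne2 : ∀ i, 1 - (q^n2 * x) * q^i ≠ 0 := by
    intro i; have := hne (n2 + i); rw [pow_add] at this
    convert this using 2; ring
  have hsplit2 := qPoch_split (q^n2 * x) hq hne2 n1
  have harg : q^n1 * (q^n2 * x) = q^(n1+n2) * x := by rw [pow_add]; ring
  rw [harg] at hsplit2
  have hP1 : (∏ i ∈ range n1, (1 - x * q^i)) ≠ 0 := prod_ne_zero_iff.2 (fun i _ => hne i)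
  have hT1 : qPochInf (q^n1 * x) q ≠ 0 := by
    intro h0; rw [hsplit1, h0, mul_zero] at hA; exact hA rfl
  have hQ : (∏ i ∈ range n1, (1 - (q^n2 * x) * q^i)) = ∏ s ∈ range n1, (1 - x * q^(n2+s)) := by
    refine prod_congr rfl (fun i _ => ?_)
    rw [pow_add]; ring
  rw [hsplit1, hsplit2, hQ]
  field_simp
  have hs' : qPochInf (x * q ^ (n1 + n2)) q ≠ 0 := by convert hs using 2; ring
  rw [mul_div_assoc, div_self hs', mul_one]

lemma telescope (g : ℕ → ℂ) (n : ℕ) (h0 : g 0 ≠ 0) (hg : ∀ i < n, g i ≠ 0) :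
    ∏ t ∈ range n, g (t+1) / g t = g n / g 0 := by
  induction n with
  | zero => simp [div_self h0]
  | succ n ih =>
    have hg' : ∀ i < n, g i ≠ 0 := fun i hi => hg i (Nat.lt_succ_of_lt hi)
    rw [prod_range_succ, ih hg']
    have hn : g n ≠ 0 := hg n (Nat.lt_succ_self n)
    field_simp

-- key combinatorial identity for the same-block product
lemma sameblock_key (f : ℕ → ℂ) (n : ℕ) :
    (∏ s ∈ range n, ∏ t ∈ range n, if s < t then f (s+t+1) else 1) * ∏ i ∈ range n, f i
      = ∏ s ∈ range n, ∏ t ∈ range n, if s ≤ t then f (s+t) else 1 := by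
  induction n with
  | zero => simp
  | succ n ih =>
    rw [prod_range_succ (f := fun s => ∏ t ∈ range (n+1), if s < t then f (s+t+1) else 1)]
    rw [prod_range_succ (f := fun s => ∏ t ∈ range (n+1), if s ≤ t then f (s+t) else 1)]
    have hL1 : ∀ s, ∏ t ∈ range (n+1), (if s < t then f (s+t+1) else 1)
        = (∏ t ∈ range n, if s < t then f (s+t+1) else 1) * (if s < n then f (s+n+1) else 1) :=
      fun s => prod_range_succ _ n
    have hR1 : ∀ s, ∏ t ∈ range (n+1), (if s ≤ t then f (s+t) else 1)
        = (∏ t ∈ range n, if s ≤ t then f (s+t) else 1) * (if s ≤ n then f (s+n) else 1) :=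
      fun s => prod_range_succ _ n
    simp only [hL1, hR1, prod_mul_distrib]
    have hln : (∏ t ∈ range n, if n < t then f (n+t+1) else 1) = 1 := by
      apply prod_eq_one; intro t ht; rw [if_neg]; exact Nat.not_lt.2 (le_of_lt (mem_range.1 ht))
    have hrn : (∏ t ∈ range n, if n ≤ t then f (n+t) else 1) = 1 := by
      apply prod_eq_one; intro t ht; rw [if_neg]; exact Nat.not_le.2 (mem_range.1 ht)
    have hsn : ∀ s ∈ range n, (if s < n then f (s+n+1) else 1) = f (s+n+1) := by
      intro s hs; rw [if_pos (mem_range.1 hs)]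
    have hsn' : ∀ s ∈ range n, (if s ≤ n then f (s+n) else 1) = f (s+n) := by
      intro s hs; rw [if_pos (le_of_lt (mem_range.1 hs))]
    rw [prod_congr rfl hsn, prod_congr rfl hsn', hln, hrn, if_neg (lt_irrefl n),
      if_pos (le_refl n), prod_range_succ f]
    have key : (∏ s ∈ range n, f (s+n+1)) * f n = (∏ s ∈ range n, f (s+n)) * f (n+n) := by
      cases n with
      | zero => simp
      | succ n' =>
        rw [prod_range_succ (fun s => f (s + (n'+1) + 1)) n',
          prod_range_succ' (fun s => f (s + (n'+1))) n']
        have : ∀ s, f (s + 1 + (n'+1)) = f (s + (n'+1) + 1) := by intro s; congr 1; omega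
        simp only [this]
        have h2 : f (n' + (n'+1) + 1) = f ((n'+1) + (n'+1)) := by congr 1; omega
        have h3 : f (0 + (n'+1)) = f (n'+1) := by congr 1; omega
        rw [h2, h3]
        ring
    linear_combination (∏ s ∈ range n, f (s+n)) * f (n+n) * ih +
      (∏ s ∈ range n, ∏ t ∈ range n, if s < t then f (s+t+1) else 1) *
        (∏ i ∈ range n, f i) * key

lemma pair_reindex {α β : Type*} [Fintype α] [LinearOrder α] [Fintype β] [DecidableEq β]
    (e : α ≃ β) (r : β → β → Prop) [DecidableRel r]
    (hirr : ∀ x, ¬ r x x) (hr : ∀ x y, x ≠ y → (r x y ↔ ¬ r y x))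
    (G : β → β → ℂ) (hG : ∀ x y, G x y = G y x) :
    ∏ i : α, ∏ j : α, (if i < j then G (e i) (e j) else 1)
      = ∏ x : β, ∏ y : β, (if r x y then G x y else 1) := by
  have h1 : ∏ i : α, ∏ j : α, (if i < j then G (e i) (e j) else 1)
      = ∏ p ∈ (univ ×ˢ univ : Finset (α × α)).filter (fun p => p.1 < p.2),
          G (e p.1) (e p.2) := by
    rw [prod_filter, ← prod_product']
  have h2 : ∏ x : β, ∏ y : β, (if r x y then G x y else 1)
      = ∏ p ∈ (univ ×ˢ univ : Finset (β × β)).filter (fun p => r p.1 p.2),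
          G p.1 p.2 := by
    rw [prod_filter, ← prod_product']
  rw [h1, h2]
  refine prod_nbij' (fun p => if r (e p.1) (e p.2) then (e p.1, e p.2) else (e p.2, e p.1))
    (fun p => if e.symm p.1 < e.symm p.2 then (e.symm p.1, e.symm p.2)
      else (e.symm p.2, e.symm p.1)) ?_ ?_ ?_ ?_ ?_
  · intro p hp
    simp only [mem_filter, mem_product, mem_univ, true_and] at hp ⊢
    have hne : e p.1 ≠ e p.2 := fun h => absurd (e.injective h) (ne_of_lt hp)
    by_cases h : r (e p.1) (e p.2)
    · simp [h]
    · simp only [if_neg h]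
      exact ((hr (e p.2) (e p.1) hne.symm).2 (by simpa using h))
  · intro p hp
    simp only [mem_filter, mem_product, mem_univ, true_and] at hp ⊢
    have hne : p.1 ≠ p.2 := fun h => hirr p.2 (h ▸ hp)
    have hne' : e.symm p.1 ≠ e.symm p.2 := fun h => hne (by simpa using congrArg e h)
    by_cases h : e.symm p.1 < e.symm p.2
    · simp [h]
    · simp only [if_neg h]
      exact lt_of_le_of_ne (not_lt.1 h) hne'.symm
  · intro p hp
    simp only [mem_filter, mem_product, mem_univ, true_and] at hp
    by_cases h : r (e p.1) (e p.2)
    · simp [h, hp]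
    · simp only [if_neg h, Equiv.symm_apply_apply]
      rw [if_neg (not_lt.2 (le_of_lt hp))]
  · intro p hp
    simp only [mem_filter, mem_product, mem_univ, true_and] at hp
    have hne : p.1 ≠ p.2 := fun h => hirr p.2 (h ▸ hp)
    by_cases h : e.symm p.1 < e.symm p.2
    · simp [h, Equiv.apply_symm_apply, hp]
    · simp only [if_neg h, Equiv.apply_symm_apply]
      rw [if_neg ((hr p.1 p.2 hne).1 hp ∘ id), ]
  · intro p hp
    by_cases h : r (e p.1) (e p.2)
    · simp [h]
    · simp only [if_neg h]
      exact hG _ _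

variable {m : ℕ} {lam : Fin m → ℕ}

def ltSig (x y : Σ a : Fin m, Fin (lam a)) : Prop :=
  x.1 < y.1 ∨ (x.1 = y.1 ∧ (x.2 : ℕ) < (y.2 : ℕ))

instance : DecidableRel (ltSig (m := m) (lam := lam)) := fun x y => by
  unfold ltSig; infer_instance

lemma ltSig_irrefl (x : Σ a : Fin m, Fin (lam a)) : ¬ ltSig x x := by
  simp [ltSig]

lemma ltSig_asymm (x y : Σ a : Fin m, Fin (lam a)) (h : x ≠ y) :
    ltSig x y ↔ ¬ ltSig y x := by
  obtain ⟨a, s⟩ := x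
  obtain ⟨b, t⟩ := y
  rcases lt_trichotomy a b with hab | hab | hab
  · simp [ltSig, hab, le_of_lt hab, hab.ne', (asymm hab : ¬ b < a), hab.ne]
  · subst hab
    have hst : (s : ℕ) ≠ (t : ℕ) := by
      intro hs
      exact h (by simp [Fin.ext_iff.2 hs])
    rcases hst.lt_or_gt with h' | h' <;>
      simp [ltSig, h', lt_irrefl, asymm h', Nat.not_lt.2 (le_of_lt h'), h'.ne, h'.ne']
  · simp [ltSig, hab, le_of_lt hab, hab.ne', (asymm hab : ¬ a < b), hab.ne]

lemma sigma_pair_split (G : (Σ a : Fin m, Fin (lam a)) → (Σ a : Fin m, Fin (lam a)) → ℂ) :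
    ∏ x : Σ a : Fin m, Fin (lam a), ∏ y : Σ a : Fin m, Fin (lam a),
        (if ltSig x y then G x y else 1)
      = (∏ a : Fin m, ∏ b ∈ Ioi a, ∏ s : Fin (lam a), ∏ t : Fin (lam b), G ⟨a,s⟩ ⟨b,t⟩) *
        ∏ a : Fin m, ∏ s : Fin (lam a), ∏ t : Fin (lam a),
          (if (s : ℕ) < (t : ℕ) then G ⟨a,s⟩ ⟨a,t⟩ else 1) := by
  have h1a : ∏ x : Σ a : Fin m, Fin (lam a), ∏ y : Σ a : Fin m, Fin (lam a),
        (if ltSig x y then G x y else 1)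
      = ∏ a : Fin m, ∏ s : Fin (lam a), ∏ b : Fin m, ∏ t : Fin (lam b),
          (if ltSig ⟨a,s⟩ ⟨b,t⟩ then G ⟨a,s⟩ ⟨b,t⟩ else 1) := by
    rw [← univ_sigma_univ, prod_sigma]
    refine Finset.prod_congr rfl (fun a _ => ?_)
    refine Finset.prod_congr rfl (fun s _ => ?_)
    rw [prod_sigma]
  have h1 : ∏ x : Σ a : Fin m, Fin (lam a), ∏ y : Σ a : Fin m, Fin (lam a),
        (if ltSig x y then G x y else 1)
      = ∏ a : Fin m, ∏ b : Fin m, ∏ s : Fin (lam a), ∏ t : Fin (lam b),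
          (if ltSig ⟨a,s⟩ ⟨b,t⟩ then G ⟨a,s⟩ ⟨b,t⟩ else 1) := by
    rw [h1a]
    exact Finset.prod_congr rfl (fun a _ => prod_comm)
  rw [h1]
  have hsplit : ∀ a : Fin m, (∏ b : Fin m, ∏ s : Fin (lam a), ∏ t : Fin (lam b),
        (if ltSig ⟨a,s⟩ ⟨b,t⟩ then G ⟨a,s⟩ ⟨b,t⟩ else 1))
      = (∏ b ∈ Ioi a, ∏ s : Fin (lam a), ∏ t : Fin (lam b), G ⟨a,s⟩ ⟨b,t⟩) *
        ∏ s : Fin (lam a), ∏ t : Fin (lam a),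
          (if (s : ℕ) < (t : ℕ) then G ⟨a,s⟩ ⟨a,t⟩ else 1) := by
    intro a
    have h2 : ∏ b : Fin m, ∏ s : Fin (lam a), ∏ t : Fin (lam b),
          (if ltSig ⟨a,s⟩ ⟨b,t⟩ then G ⟨a,s⟩ ⟨b,t⟩ else 1)
        = ∏ b ∈ Ici a, ∏ s : Fin (lam a), ∏ t : Fin (lam b),
          (if ltSig ⟨a,s⟩ ⟨b,t⟩ then G ⟨a,s⟩ ⟨b,t⟩ else 1) := by
      symm
      apply prod_subset (subset_univ _)
      intro b _ hb
      have hba : b < a := lt_of_not_ge (by simpa using hb)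
      apply prod_eq_one; intro s _; apply prod_eq_one; intro t _
      rw [if_neg]
      rintro (h | ⟨h, -⟩)
      · exact absurd h (asymm hba)
      · exact absurd h hba.ne'
    rw [h2, Ici_eq_cons_Ioi, prod_cons]
    rw [mul_comm]
    congr 1
    · refine Finset.prod_congr rfl (fun b hb => ?_)
      have hab : a < b := mem_Ioi.1 hb
      refine Finset.prod_congr rfl (fun s _ => Finset.prod_congr rfl (fun t _ => ?_))
      rw [if_pos (show ltSig (⟨a,s⟩ : Σ a : Fin m, Fin (lam a)) ⟨b,t⟩ from Or.inl hab)]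
    · refine Finset.prod_congr rfl (fun s _ => Finset.prod_congr rfl (fun t _ => ?_))
      have : ltSig (⟨a,s⟩ : Σ a : Fin m, Fin (lam a)) ⟨a,t⟩ ↔ (s:ℕ) < (t:ℕ) := by
        simp [ltSig]
      simp only [this]
  simp only [hsplit]
  rw [prod_mul_distrib]

lemma telescope' (x q : ℂ) (s n : ℕ) (h0 : 1 - x * q^s ≠ 0)
    (hg : ∀ i < n, 1 - x * q^(s+i) ≠ 0) :
    ∏ t ∈ range n, (1 - x * q^(s+t+1)) / (1 - x * q^(s+t)) = (1 - x * q^(s+n)) / (1 - x * q^s) := by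
  induction n with
  | zero => simp [div_self h0]
  | succ n ih =>
    rw [prod_range_succ, ih (fun i hi => hg i (by omega))]
    have hn : 1 - x * q^(s+n) ≠ 0 := hg n (by omega)
    field_simp
    ring

lemma cross_full (q x : ℂ) (hq : ‖q‖ < 1) (n1 n2 : ℕ) (hn2 : 0 < n2)
    (hf : ∀ s t : ℕ, s < n1 → t < n2 → 1 - x * q^(s+t) ≠ 0)
    (hA : qPochInf x q ≠ 0) (hs : qPochInf (q^(n1+n2) * x) q ≠ 0) :
    (∏ s ∈ range n1, ∏ t ∈ range n2, (1 - x*q^(s+t+1))/(1 - x*q^(s+t)))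
    = (qPochInf (q^n1 * x) q * qPochInf (q^n2 * x) q) /
        (qPochInf x q * qPochInf (q^(n1+n2) * x) q) := by
  rw [qPoch_ratio_pair hq hA n1 n2 hs]
  have h1 : ∀ s ∈ range n1, (∏ t ∈ range n2, (1 - x*q^(s+t+1))/(1 - x*q^(s+t)))
      = (1 - x * q^(n2+s)) / (1 - x * q^s) := by
    intro s hs1
    have hs1' : s < n1 := mem_range.1 hs1
    have h0 : 1 - x * q^s ≠ 0 := by simpa using hf s 0 hs1' hn2
    rw [telescope' x q s n2 h0 (fun i hi => hf s i hs1' hi)]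
    rw [Nat.add_comm s n2]
  rw [prod_congr rfl h1, prod_div_distrib]

lemma sameblock_full (q y : ℂ) (hq : ‖q‖ < 1) (n : ℕ) (hn : 0 < n)
    (hf : ∀ s t : ℕ, s < n → t < n → 1 - y * q^(s+t) ≠ 0)
    (hA : qPochInf y q ≠ 0) :
    (∏ s ∈ range n, ∏ t ∈ range n, if s < t then (1 - y*q^(s+t+1))/(1 - y*q^(s+t)) else 1) *
      (∏ s ∈ range n, (1 - y*q^(s+s))⁻¹)
    = qPochInf (q^n * y) q / qPochInf y q := by
  set f : ℕ → ℂ := fun i => 1 - y * q^i with hfdef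
  have hfi : ∀ i < n, f i ≠ 0 := by
    intro i hi
    have := hf i 0 hi hn
    simpa using this
  have hP2 : (∏ s ∈ range n, ∏ t ∈ range n, if s < t then f (s+t) else 1) ≠ 0 := by
    refine prod_ne_zero_iff.2 (fun s hs => prod_ne_zero_iff.2 (fun t ht => ?_))
    split
    · exact hf s t (mem_range.1 hs) (mem_range.1 ht)
    · exact one_ne_zero
  have hS : (∏ s ∈ range n, f (s+s)) ≠ 0 :=
    prod_ne_zero_iff.2 (fun s hs => hf s s (mem_range.1 hs) (mem_range.1 hs))
  have hF : (∏ i ∈ range n, f i) ≠ 0 :=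
    prod_ne_zero_iff.2 (fun i hi => hfi i (mem_range.1 hi))
  have hsplit : (∏ s ∈ range n, ∏ t ∈ range n, if s ≤ t then f (s+t) else 1)
      = (∏ s ∈ range n, ∏ t ∈ range n, if s < t then f (s+t) else 1) *
        ∏ s ∈ range n, f (s+s) := by
    rw [← prod_mul_distrib]
    refine Finset.prod_congr rfl (fun s hs => ?_)
    have heach : ∀ t, (if s ≤ t then f (s+t) else 1)
        = (if s < t then f (s+t) else 1) * (if s = t then f (s+t) else 1) := by
      intro t
      rcases lt_trichotomy s t with h | h | h
      · rw [if_pos (le_of_lt h), if_pos h, if_neg h.ne, mul_one]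
      · rw [if_pos (le_of_eq h), if_neg (by omega : ¬ s < t), if_pos h, one_mul]
      · rw [if_neg (by omega : ¬ s ≤ t), if_neg (by omega : ¬ s < t), if_neg (by omega : ¬ s = t), mul_one]
    simp only [heach]
    rw [prod_mul_distrib]
    congr 1
    rw [Finset.prod_eq_single_of_mem s hs (fun t _ hts => if_neg (fun h => hts h.symm))]
    rw [if_pos rfl]
  have key := sameblock_key f n
  rw [hsplit] at key
  have hq1 : (∏ s ∈ range n, ∏ t ∈ range n, if s < t then (1 - y*q^(s+t+1))/(1 - y*q^(s+t)) else 1)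
      = (∏ s ∈ range n, ∏ t ∈ range n, if s < t then f (s+t+1) else 1) /
        (∏ s ∈ range n, ∏ t ∈ range n, if s < t then f (s+t) else 1) := by
    rw [← prod_div_distrib]
    refine Finset.prod_congr rfl (fun s _ => ?_)
    rw [← prod_div_distrib]
    refine Finset.prod_congr rfl (fun t _ => ?_)
    split
    · rfl
    · rw [div_one]
  have hq2 : (∏ s ∈ range n, (1 - y*q^(s+s))⁻¹) = (∏ s ∈ range n, f (s+s))⁻¹ := by
    rw [← prod_inv_distrib]
  rw [hq1, hq2, qPoch_ratio_diag hq hA n]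
  have hfrange : (∏ i ∈ range n, (1 - y * q^i)) = ∏ i ∈ range n, f i := rfl
  rw [hfrange]
  field_simp
  linear_combination key

noncomputable def Gblk (q : ℂ) {m : ℕ} {lam : Fin m → ℕ} (w : Fin m → ℂ)
    (x y : Σ a : Fin m, Fin (lam a)) : ℂ :=
  (1 - q * ((q^((x.2:ℕ))) * w x.1) * ((q^((y.2:ℕ))) * w y.1)) /
    (1 - ((q^((x.2:ℕ))) * w x.1) * ((q^((y.2:ℕ))) * w y.1))

lemma fin_double_prod_range {n n' : ℕ} (h : ℕ → ℕ → ℂ) :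
    (∏ s : Fin n, ∏ t : Fin n', h (s:ℕ) (t:ℕ)) = ∏ s ∈ range n, ∏ t ∈ range n', h s t := by
  rw [← Fin.prod_univ_eq_prod_range (fun s => ∏ t ∈ range n', h s t)]
  exact Fintype.prod_congr _ _ (fun s => Fin.prod_univ_eq_prod_range (h (s:ℕ)) n')

/-- String specialization identity (q-Whittaker case): let `λ = (λ_1 ≥ ⋯ ≥ λ_m > 0)` be a
partition of `k`, `0 < q < 1`, and let `(z_1,...,z_k)` be the concatenation
`(w_1, q w_1, ..., q^{λ_1−1} w_1, ..., w_m, ..., q^{λ_m−1} w_m)` (encoded via a bijection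
`e : Fin k ≃ Σ a, Fin (λ a)`).  Then
`∏_{a<b≤k} (1 − q z_a z_b)/(1 − z_a z_b) · ∏_i 1/(1 − z_i²)
 = ∏_{a<b≤m} (q^{λ_a} w_a w_b;q)_∞ (q^{λ_b} w_a w_b;q)_∞ /
     ((w_a w_b;q)_∞ (q^{λ_a+λ_b} w_a w_b;q)_∞) · ∏_j (q^{λ_j} w_j²;q)_∞/(w_j²;q)_∞`. -/
theorem string_specialization_qWhittaker
    {m k : ℕ} (lam : Fin m → ℕ) (q : ℝ) (hq0 : 0 < q) (hq1 : q < 1)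
    (w : Fin m → ℂ)
    (hpos : ∀ a, 0 < lam a)
    (hmono : ∀ a b : Fin m, a ≤ b → lam b ≤ lam a)
    (hk : ∑ a, lam a = k)
    (z : Fin k → ℂ) (e : Fin k ≃ (Σ a : Fin m, Fin (lam a)))
    (hz : ∀ i, z i = (q:ℂ)^(((e i).2 : ℕ)) * w (e i).1)
    (hden1 : ∀ i j : Fin k, i ≠ j → 1 - z i * z j ≠ 0)
    (hden2 : ∀ i, 1 - (z i)^2 ≠ 0)
    (hden3 : ∀ a b : Fin m, a ≠ b → qPochInf (w a * w b) (q:ℂ) ≠ 0)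
    (hden4 : ∀ a b : Fin m, a ≠ b →
      qPochInf ((q:ℂ)^(lam a + lam b) * (w a * w b)) (q:ℂ) ≠ 0)
    (hden5 : ∀ j, qPochInf ((w j)^2) (q:ℂ) ≠ 0) :
    (∏ i : Fin k, ∏ j ∈ Finset.Ioi i, (1 - (q:ℂ) * z i * z j) / (1 - z i * z j)) *
        ∏ i : Fin k, (1 - (z i)^2)⁻¹ =
      (∏ a : Fin m, ∏ b ∈ Finset.Ioi a,
          (qPochInf ((q:ℂ)^(lam a) * (w a * w b)) (q:ℂ) *
              qPochInf ((q:ℂ)^(lam b) * (w a * w b)) (q:ℂ)) /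
            (qPochInf (w a * w b) (q:ℂ) *
              qPochInf ((q:ℂ)^(lam a + lam b) * (w a * w b)) (q:ℂ))) *
        ∏ j : Fin m,
          qPochInf ((q:ℂ)^(lam j) * (w j)^2) (q:ℂ) / qPochInf ((w j)^2) (q:ℂ) := by
  classical
  have hqn : ‖(q:ℂ)‖ < 1 := by
    rw [Complex.norm_real, Real.norm_eq_abs, abs_of_pos hq0]; exact hq1
  have hzX : ∀ X : Σ a : Fin m, Fin (lam a), z (e.symm X) = (q:ℂ)^((X.2:ℕ)) * w X.1 := by
    intro X
    rw [hz, Equiv.apply_symm_apply]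
  have hfact : ∀ (a b : Fin m) (s t : ℕ), s < lam a → t < lam b →
      1 - (w a * w b) * (q:ℂ)^(s+t) ≠ 0 := by
    intro a b s t hs ht
    by_cases hcase : a = b ∧ s = t
    · obtain ⟨ha, hst⟩ := hcase
      subst ha; subst hst
      have h2 := hden2 (e.symm ⟨a, ⟨s, hs⟩⟩)
      rw [hzX] at h2
      have h2' : 1 - ((q:ℂ)^s * w a)^2 ≠ 0 := h2
      intro h0
      apply h2'
      rw [pow_add] at h0
      linear_combination h0
    · have hST : (⟨a, ⟨s, hs⟩⟩ : Σ a : Fin m, Fin (lam a)) ≠ ⟨b, ⟨t, ht⟩⟩ := by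
        intro hEq
        have ha : a = b := congrArg Sigma.fst hEq
        subst ha
        obtain ⟨-, hv⟩ := Sigma.mk.inj_iff.1 hEq
        rw [heq_iff_eq] at hv
        exact hcase ⟨rfl, congrArg Fin.val hv⟩
      have hij : e.symm ⟨a, ⟨s, hs⟩⟩ ≠ e.symm ⟨b, ⟨t, ht⟩⟩ :=
        fun h => hST (by simpa using congrArg e h)
      have h1 := hden1 _ _ hij
      rw [hzX, hzX] at h1
      have h1' : 1 - ((q:ℂ)^s * w a) * ((q:ℂ)^t * w b) ≠ 0 := h1
      intro h0
      apply h1'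
      rw [pow_add] at h0
      linear_combination h0
  have step1 : (∏ i : Fin k, ∏ j ∈ Finset.Ioi i, (1 - (q:ℂ) * z i * z j) / (1 - z i * z j))
      = ∏ i : Fin k, ∏ j : Fin k, (if i < j then Gblk (q:ℂ) w (e i) (e j) else 1) := by
    refine Finset.prod_congr rfl (fun i _ => ?_)
    have hIoi : Finset.Ioi i = univ.filter (fun j => i < j) := by ext j; simp
    rw [hIoi, prod_filter]
    refine Finset.prod_congr rfl (fun j _ => ?_)
    split
    · rw [hz i, hz j]; rfl
    · rfl
  have hGsym : ∀ x y : Σ a : Fin m, Fin (lam a), Gblk (q:ℂ) w x y = Gblk (q:ℂ) w y x := by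
    intro x y; simp only [Gblk]; ring
  have step2 := pair_reindex e ltSig ltSig_irrefl ltSig_asymm (Gblk (q:ℂ) w) hGsym
  have step3 := sigma_pair_split (lam := lam) (Gblk (q:ℂ) w)
  have step4 : (∏ i : Fin k, (1 - (z i)^2)⁻¹)
      = ∏ a : Fin m, ∏ s : Fin (lam a), (1 - ((q:ℂ)^((s:ℕ)) * w a)^2)⁻¹ := by
    have h1 : (∏ i : Fin k, (1 - (z i)^2)⁻¹)
        = ∏ i : Fin k, (fun x : Σ a : Fin m, Fin (lam a) =>
            (1 - ((q:ℂ)^((x.2:ℕ)) * w x.1)^2)⁻¹) (e i) :=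
      Fintype.prod_congr _ _ (fun i => by rw [hz i])
    rw [h1, Equiv.prod_comp e (fun x : Σ a : Fin m, Fin (lam a) =>
      (1 - ((q:ℂ)^((x.2:ℕ)) * w x.1)^2)⁻¹)]
    rw [← univ_sigma_univ, prod_sigma]
  have hcross : ∀ a : Fin m, ∀ b ∈ Ioi a,
      (∏ s : Fin (lam a), ∏ t : Fin (lam b), Gblk (q:ℂ) w ⟨a,s⟩ ⟨b,t⟩)
      = (qPochInf ((q:ℂ)^(lam a) * (w a * w b)) (q:ℂ) *
              qPochInf ((q:ℂ)^(lam b) * (w a * w b)) (q:ℂ)) /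
            (qPochInf (w a * w b) (q:ℂ) *
              qPochInf ((q:ℂ)^(lam a + lam b) * (w a * w b)) (q:ℂ)) := by
    intro a b hb
    have hab : a < b := mem_Ioi.1 hb
    have h1 : (∏ s : Fin (lam a), ∏ t : Fin (lam b), Gblk (q:ℂ) w ⟨a,s⟩ ⟨b,t⟩)
        = ∏ s ∈ range (lam a), ∏ t ∈ range (lam b),
            (1 - (w a * w b) * (q:ℂ)^(s+t+1)) / (1 - (w a * w b) * (q:ℂ)^(s+t)) := by
      rw [← fin_double_prod_range (fun s t =>
        (1 - (w a * w b) * (q:ℂ)^(s+t+1)) / (1 - (w a * w b) * (q:ℂ)^(s+t)))]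
      refine Fintype.prod_congr _ _ (fun s => Fintype.prod_congr _ _ (fun t => ?_))
      simp only [Gblk]
      congr 1 <;> ring
    rw [h1, cross_full (q:ℂ) (w a * w b) hqn (lam a) (lam b) (hpos b)
      (fun s t hs ht => hfact a b s t hs ht) (hden3 a b hab.ne) (hden4 a b hab.ne)]
  have hsame : ∀ a : Fin m,
      (∏ s : Fin (lam a), ∏ t : Fin (lam a),
          (if (s:ℕ) < (t:ℕ) then Gblk (q:ℂ) w ⟨a,s⟩ ⟨a,t⟩ else 1)) *
        (∏ s : Fin (lam a), (1 - ((q:ℂ)^((s:ℕ)) * w a)^2)⁻¹)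
      = qPochInf ((q:ℂ)^(lam a) * (w a)^2) (q:ℂ) / qPochInf ((w a)^2) (q:ℂ) := by
    intro a
    have hf : ∀ s t : ℕ, s < lam a → t < lam a → 1 - (w a)^2 * (q:ℂ)^(s+t) ≠ 0 := by
      intro s t hs ht
      have h := hfact a a s t hs ht
      intro h0
      apply h
      linear_combination h0
    have h1 : (∏ s : Fin (lam a), ∏ t : Fin (lam a),
          (if (s:ℕ) < (t:ℕ) then Gblk (q:ℂ) w ⟨a,s⟩ ⟨a,t⟩ else 1))
        = ∏ s ∈ range (lam a), ∏ t ∈ range (lam a),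
            (if s < t then (1 - (w a)^2*(q:ℂ)^(s+t+1))/(1 - (w a)^2*(q:ℂ)^(s+t)) else 1) := by
      rw [← fin_double_prod_range (fun s t =>
        if s < t then (1 - (w a)^2*(q:ℂ)^(s+t+1))/(1 - (w a)^2*(q:ℂ)^(s+t)) else 1)]
      refine Fintype.prod_congr _ _ (fun s => Fintype.prod_congr _ _ (fun t => ?_))
      split
      · simp only [Gblk]; congr 1 <;> ring
      · rfl
    have h2 : (∏ s : Fin (lam a), (1 - ((q:ℂ)^((s:ℕ)) * w a)^2)⁻¹)
        = ∏ s ∈ range (lam a), (1 - (w a)^2*(q:ℂ)^(s+s))⁻¹ := by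
      rw [← Fin.prod_univ_eq_prod_range (fun s => (1 - (w a)^2*(q:ℂ)^(s+s))⁻¹)]
      refine Fintype.prod_congr _ _ (fun s => ?_)
      congr 2
      ring
    rw [h1, h2, sameblock_full (q:ℂ) ((w a)^2) hqn (lam a) (hpos a) hf (hden5 a)]
  rw [step1, step2, step3, step4]
  rw [mul_assoc, ← prod_mul_distrib]
  congr 1
  · exact Finset.prod_congr rfl (fun a _ => Finset.prod_congr rfl (fun b hb => hcross a b hb))
  · exact Fintype.prod_congr _ _ hsame
end

section
/- Convergence of the q-exponential to the exponential: for every fixed z ∈ ℂ, lim_{q→1⁻} e_q(z) = e^z, where e_q(z) = 1 / ( (z(1−q); q)_∞ ) and (a; q)_∞ = ∏_{i=0}^∞ (1 − a q^i). (For q close enough to 1 the product (z(1−q); q)_∞ is nonzero, so e_q(z) is well defined.) -/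
/-- The q-exponential `e_q(z) = 1/((z(1−q); q)_∞)`. -/
noncomputable def qExp (q : ℝ) (z : ℂ) : ℂ := (qPochInf (z * (1 - (q:ℂ))) (q:ℂ))⁻¹

open Filter Complex

lemma qExp_key (z : ℂ) {q : ℝ} (hq : q ∈ Set.Ioo (0:ℝ) 1) (h : ‖z‖ * (1-q) ≤ 1/2) :
    qExp q z = Complex.exp (-∑' i : ℕ, Complex.log (1 - z * (1-(q:ℂ)) * (q:ℂ)^i)) ∧
    ‖(∑' i : ℕ, Complex.log (1 - z * (1-(q:ℂ)) * (q:ℂ)^i)) + z‖ ≤ ‖z‖^2 * (1-q) := by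
  set w : ℂ := z * (1-(q:ℂ)) with hw
  have hqnorm : ‖(q:ℂ)‖ < 1 := by
    simp only [Complex.norm_real, Real.norm_eq_abs, abs_of_pos hq.1]; exact hq.2
  have hqnn : (0:ℝ) ≤ q := hq.1.le
  have hwnorm : ‖w‖ ≤ 1/2 := by
    rw [hw]
    calc ‖z * (1-(q:ℂ))‖ = ‖z‖ * (1-q) := by
          rw [norm_mul]
          congr 1
          rw [show (1:ℂ) - (q:ℂ) = ((1-q:ℝ):ℂ) by push_cast; ring, Complex.norm_real,
            Real.norm_eq_abs, _root_.abs_of_nonneg (by linarith [hq.2.le] : (0:ℝ) ≤ 1-q)]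
      _ ≤ 1/2 := h
  have hqi : ∀ i : ℕ, ‖w * (q:ℂ)^i‖ ≤ ‖w‖ * q^i := by
    intro i
    rw [norm_mul, norm_pow]
    gcongr
    rw [Complex.norm_real, Real.norm_eq_abs, _root_.abs_of_nonneg hqnn]
  have hterm : ∀ i : ℕ, ‖w * (q:ℂ)^i‖ ≤ 1/2 := by
    intro i
    refine (hqi i).trans ?_
    calc ‖w‖ * q^i ≤ (1/2) * 1 := by
          gcongr
          exact pow_le_one₀ hqnn hq.2.le
      _ = 1/2 := by ring
  have hne : ∀ i : ℕ, (1 : ℂ) - w * (q:ℂ)^i ≠ 0 := by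
    intro i
    intro hc
    have : ‖w * (q:ℂ)^i‖ = 1 := by
      have : w * (q:ℂ)^i = 1 := by linear_combination -hc
      rw [this]; simp
    linarith [hterm i]
  -- summability of logs
  have hsumgeo : Summable (fun i : ℕ => ‖w‖ * q^i) :=
    (summable_geometric_of_lt_one hqnn hq.2).mul_left _
  have hlog_le : ∀ i : ℕ, ‖Complex.log (1 - w * (q:ℂ)^i)‖ ≤ (3/2) * (‖w‖ * q^i) := by
    intro i
    have := Complex.norm_log_one_add_half_le_self (z := -(w * (q:ℂ)^i)) (by simpa using hterm i)
    rw [show (1:ℂ) + -(w * (q:ℂ)^i) = 1 - w * (q:ℂ)^i by ring] at this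
    refine this.trans ?_
    rw [norm_neg]
    gcongr
    exact hqi i
  have hsumlog : Summable (fun i : ℕ => Complex.log (1 - w * (q:ℂ)^i)) := by
    apply Summable.of_norm
    exact Summable.of_nonneg_of_le (fun i => norm_nonneg _) hlog_le (hsumgeo.mul_left _)
  set S := ∑' i : ℕ, Complex.log (1 - w * (q:ℂ)^i) with hS
  constructor
  · -- qExp q z = exp (-S)
    have hprod : Complex.exp S = ∏' i : ℕ, (1 - w * (q:ℂ)^i) := by
      exact Complex.cexp_tsum_eq_tprod (f := fun i => 1 - w * (q:ℂ)^i) hne hsumlog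
    rw [qExp, qPochInf, ← hprod, ← Complex.exp_neg]
  · -- the bound
    have hgeo : Summable (fun i : ℕ => w * (q:ℂ)^i) := by
      apply Summable.mul_left
      exact summable_geometric_of_norm_lt_one hqnorm
    have htsum_geo : ∑' i : ℕ, w * (q:ℂ)^i = z := by
      rw [tsum_mul_left, tsum_geometric_of_norm_lt_one hqnorm, hw]
      have : (1:ℂ) - (q:ℂ) ≠ 0 := by
        intro hc
        have : (q:ℂ) = 1 := by linear_combination -hc
        have := Complex.ofReal_injective (by exact_mod_cast this)
        linarith [hq.2]
      field_simp
    have hSz : S + z = ∑' i : ℕ, (Complex.log (1 - w * (q:ℂ)^i) + w * (q:ℂ)^i) := by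
      rw [Summable.tsum_add hsumlog hgeo, htsum_geo]
    rw [hSz]
    have hbd : ∀ i : ℕ, ‖Complex.log (1 - w * (q:ℂ)^i) + w * (q:ℂ)^i‖ ≤ ‖w‖^2 * (q^2)^i := by
      intro i
      have h1 : ‖w * (q:ℂ)^i‖ < 1 := lt_of_le_of_lt (hterm i) (by norm_num)
      have := Complex.norm_log_one_add_sub_self_le (z := -(w * (q:ℂ)^i)) (by simpa using h1)
      rw [show (1:ℂ) + -(w * (q:ℂ)^i) = 1 - w * (q:ℂ)^i by ring] at this
      have h2 : ‖Complex.log (1 - w * (q:ℂ)^i) + w * (q:ℂ)^i‖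
          ≤ ‖-(w * (q:ℂ)^i)‖^2 * (1 - ‖-(w * (q:ℂ)^i)‖)⁻¹ / 2 := by
        convert this using 2
        ring
      refine h2.trans ?_
      rw [norm_neg]
      have h3 : (1 - ‖w * (q:ℂ)^i‖)⁻¹ ≤ 2 := by
        rw [inv_le_comm₀ (by linarith [hterm i]) (by norm_num)]
        linarith [hterm i]
      calc ‖w * (q:ℂ)^i‖^2 * (1 - ‖w * (q:ℂ)^i‖)⁻¹ / 2
          ≤ ‖w * (q:ℂ)^i‖^2 * 2 / 2 := by gcongr
        _ = ‖w * (q:ℂ)^i‖^2 := by ring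
        _ ≤ (‖w‖ * q^i)^2 := by gcongr; exact hqi i
        _ = ‖w‖^2 * (q^2)^i := by ring
    have hsumq2 : Summable (fun i : ℕ => ‖w‖^2 * (q^2)^i) := by
      apply Summable.mul_left
      exact summable_geometric_of_lt_one (by positivity) (by nlinarith [hq.1, hq.2])
    have hsumbd : Summable (fun i : ℕ => ‖Complex.log (1 - w * (q:ℂ)^i) + w * (q:ℂ)^i‖) :=
      Summable.of_nonneg_of_le (fun i => norm_nonneg _) hbd hsumq2
    calc ‖∑' i : ℕ, (Complex.log (1 - w * (q:ℂ)^i) + w * (q:ℂ)^i)‖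
        ≤ ∑' i : ℕ, ‖Complex.log (1 - w * (q:ℂ)^i) + w * (q:ℂ)^i‖ :=
          norm_tsum_le_tsum_norm hsumbd
      _ ≤ ∑' i : ℕ, ‖w‖^2 * (q^2)^i := Summable.tsum_le_tsum hbd hsumbd hsumq2
      _ = ‖w‖^2 * (1 - q^2)⁻¹ := by
          rw [tsum_mul_left, tsum_geometric_of_lt_one (by positivity) (by nlinarith [hq.1, hq.2])]
      _ ≤ ‖z‖^2 * (1-q) := by
          have hwz : ‖w‖ = ‖z‖ * (1-q) := by
            rw [hw, norm_mul, show (1:ℂ) - (q:ℂ) = ((1-q:ℝ):ℂ) by push_cast; ring,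
              Complex.norm_real, Real.norm_eq_abs,
              _root_.abs_of_nonneg (by linarith [hq.2.le] : (0:ℝ) ≤ 1-q)]
          rw [hwz]
          have h1q : (0:ℝ) < 1 - q^2 := by nlinarith [hq.1, hq.2]
          rw [← div_eq_mul_inv, div_le_iff₀ h1q]
          have hzn : (0:ℝ) ≤ ‖z‖ := norm_nonneg z
          nlinarith [hq.1, hq.2, sq_nonneg (‖z‖ * (1-q)), sq_nonneg ‖z‖]

/-- Convergence of the q-exponential to the exponential: for every fixed `z ∈ ℂ`,
`e_q(z) → e^z` as `q → 1⁻` (through `q ∈ (0,1)`). -/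
theorem qExp_tendsto_exp (z : ℂ) :
    Filter.Tendsto (fun q : ℝ => qExp q z)
      (nhdsWithin 1 (Set.Ioo (0:ℝ) 1)) (nhds (Complex.exp z)) := by
  set L := nhdsWithin (1:ℝ) (Set.Ioo (0:ℝ) 1) with hL
  have hδ : (0:ℝ) < (2*(‖z‖+1))⁻¹ := by positivity
  have hev : ∀ᶠ q in L, q ∈ Set.Ioo (0:ℝ) 1 ∧ ‖z‖ * (1-q) ≤ 1/2 := by
    filter_upwards [self_mem_nhdsWithin,
      eventually_nhdsWithin_of_eventually_nhds
        (eventually_gt_nhds (show 1 - (2*(‖z‖+1))⁻¹ < 1 by linarith))] with q hq hq'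
    refine ⟨hq, ?_⟩
    have h1 : 1 - q ≤ (2*(‖z‖+1))⁻¹ := by linarith
    have h2 : ‖z‖ * (1-q) ≤ ‖z‖ * (2*(‖z‖+1))⁻¹ := by
      apply mul_le_mul_of_nonneg_left h1 (norm_nonneg z)
    refine h2.trans ?_
    rw [mul_inv_le_iff₀ (by positivity)]
    nlinarith [norm_nonneg z]
  set S : ℝ → ℂ := fun q => ∑' i : ℕ, Complex.log (1 - z * (1-(q:ℂ)) * (q:ℂ)^i) with hSdef
  have hzero : Filter.Tendsto (fun q => S q + z) L (nhds 0) := by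
    refine squeeze_zero_norm' (f := fun q => S q + z) (a := fun q : ℝ => ‖z‖^2 * (1-q)) ?_ ?_
    · filter_upwards [hev] with q hq
      exact (qExp_key z hq.1 hq.2).2
    · have : Filter.Tendsto (fun q : ℝ => ‖z‖^2 * (1-q)) (nhds 1) (nhds (‖z‖^2 * (1-1))) :=
        ((continuous_const.mul (continuous_const.sub continuous_id)).tendsto 1)
      simpa using this.mono_left nhdsWithin_le_nhds
  have hStend : Filter.Tendsto S L (nhds (-z)) := by
    have := hzero.sub (tendsto_const_nhds (x := z) (f := L))
    simpa using this
  have hexp : Filter.Tendsto (fun q => Complex.exp (-(S q))) L (nhds (Complex.exp z)) := by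
    have h1 : Filter.Tendsto (fun q => -(S q)) L (nhds z) := by simpa using hStend.neg
    exact (Complex.continuous_exp.tendsto z).comp h1
  apply hexp.congr'
  filter_upwards [hev] with q hq
  exact ((qExp_key z hq.1 hq.2).1).symm
end
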